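/- Let m, n ≥ 2 be integers and let P_m □ P_n denote the Cartesian product of the paths P_m and P_n (the m × n grid graph). Then the 2-Grundy domination number satisfies γ_gr^2(P_m □ P_n) = mn − 1. -/

import Mathlib

/-- A sequence `S` of distinct vertices is a generalized `k`-Grundy sequence with respect to
neighborhood assignments `N₁` (where the footprinted vertex must lie relative to the new
vertex) and `N₂` (the neighborhoods of earlier vertices that must contain the footprinted
vertex fewer than `k` times): for each position `i` there is a vertex `u ∈ N₁ (S i)` that
belongs to `N₂ w` for fewer than `k` of the vertices `w` preceding position `i`. -/
def IsGrundySeq {V : Type*} (k : ℕ) (N₁ N₂ : V → Set V) (S : List V) : Prop :=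
  S.Nodup ∧ ∀ (i : ℕ) (hi : i < S.length),
    ∃ u ∈ N₁ (S.get ⟨i, hi⟩), {w | w ∈ S.take i ∧ u ∈ N₂ w}.ncard < k

/-- The length of a longest generalized `k`-Grundy sequence. -/
noncomputable def grundyVal {V : Type*} (k : ℕ) (N₁ N₂ : V → Set V) : ℕ :=
  sSup {m | ∃ S : List V, IsGrundySeq k N₁ N₂ S ∧ S.length = m}

/-- The closed neighborhood `N[v]` of a vertex. -/
def closedNbhd {V : Type*} (G : SimpleGraph V) (v : V) : Set V :=
  insert v (G.neighborSet v)

/-- The `k`-Grundy domination number `γ_gr^k(G)`. -/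
noncomputable def kGrundy {V : Type*} (G : SimpleGraph V) (k : ℕ) : ℕ :=
  grundyVal k (closedNbhd G) (closedNbhd G)

/-- The `k`-`L`-Grundy domination number `γ_gr^{L,k}(G)`. -/
noncomputable def kLGrundy {V : Type*} (G : SimpleGraph V) (k : ℕ) : ℕ :=
  grundyVal k (closedNbhd G) G.neighborSet

/-- The `k`-`Z`-Grundy domination number `γ_gr^{Z,k}(G)`. -/
noncomputable def kZGrundy {V : Type*} (G : SimpleGraph V) (k : ℕ) : ℕ :=
  grundyVal k G.neighborSet (closedNbhd G)

/-- The `k`-`t`-Grundy domination number `γ_gr^{t,k}(G)`. -/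
noncomputable def ktGrundy {V : Type*} (G : SimpleGraph V) (k : ℕ) : ℕ :=
  grundyVal k G.neighborSet G.neighborSet

open SimpleGraph

lemma mem_closedNbhd' {V : Type*} {G : SimpleGraph V} {u v : V} :
    u ∈ closedNbhd G v ↔ u = v ∨ G.Adj v u := by
  simp [closedNbhd]

/-- The `k`-th vertex in row-major order. -/
def gv (m n : ℕ) (hm : 0 < m) (hn : 0 < n) (k : ℕ) : Fin m × Fin n :=
  (⟨k / n % m, Nat.mod_lt _ hm⟩, ⟨k % n, Nat.mod_lt _ hn⟩)

lemma gv_fst {m n : ℕ} (hm : 0 < m) (hn : 0 < n) {k : ℕ} (hk : k < m * n) :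
    ((gv m n hm hn k).1 : ℕ) = k / n := by
  have : k / n < m := (Nat.div_lt_iff_lt_mul hn).2 (by omega)
  simp [gv, Nat.mod_eq_of_lt this]

lemma gv_snd {m n : ℕ} (hm : 0 < m) (hn : 0 < n) {k : ℕ} :
    ((gv m n hm hn k).2 : ℕ) = k % n := rfl

lemma pos_gv {m n : ℕ} (hm : 0 < m) (hn : 0 < n) {k : ℕ} (hk : k < m * n) :
    ((gv m n hm hn k).1 : ℕ) * n + ((gv m n hm hn k).2 : ℕ) = k := by
  rw [gv_fst hm hn hk, gv_snd]
  exact Nat.div_add_mod' k n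

/-- Upper bound: any 2-Grundy sequence in the grid has length at most `m*n - 1`. -/
lemma grid_upper (m n : ℕ) (hm : 2 ≤ m) (hn : 2 ≤ n)
    (S : List (Fin m × Fin n))
    (hS : IsGrundySeq 2 (closedNbhd (pathGraph m □ pathGraph n))
      (closedNbhd (pathGraph m □ pathGraph n)) S) :
    S.length ≤ m * n - 1 := by
  set G := pathGraph m □ pathGraph n with hG
  have hcard : Fintype.card (Fin m × Fin n) = m * n := by simp
  have hlen_le : S.length ≤ m * n := by
    have := hS.1.length_le_card
    omega
  by_contra hcon
  have hlen : S.length = m * n := by omega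
  -- S contains every vertex
  have hall : ∀ w : Fin m × Fin n, w ∈ S := by
    intro w
    have huniv : S.toFinset = Finset.univ := by
      apply Finset.eq_univ_of_card
      rw [List.toFinset_card_of_nodup hS.1, hlen, hcard]
    have : w ∈ S.toFinset := by rw [huniv]; exact Finset.mem_univ w
    simpa using this
  have hNpos : 0 < m * n := by positivity
  have hilast : m * n - 1 < S.length := by omega
  obtain ⟨u, hu, hcount⟩ := hS.2 (m * n - 1) hilast
  set vlast := S.get ⟨m * n - 1, hilast⟩ with hvlast
  -- any vertex different from vlast lies in the prefix
  have hmem_take : ∀ w : Fin m × Fin n, w ≠ vlast → w ∈ S.take (m * n - 1) := by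
    intro w hw
    obtain ⟨⟨j, hj⟩, hjw⟩ := List.mem_iff_get.1 (hall w)
    have hjne : j ≠ m * n - 1 := by
      intro h; apply hw; rw [← hjw, hvlast]; exact congrArg S.get (Fin.ext h)
    have hjlt : j < m * n - 1 := by omega
    have hjt : j < (S.take (m * n - 1)).length := by
      rw [List.length_take]; omega
    have : (S.take (m * n - 1))[j] = w := by
      rw [List.getElem_take]; exact hjw
    rw [← this]
    exact List.getElem_mem _
  obtain ⟨p, q⟩ := u
  -- a path-neighbor in each coordinate
  have hpick : ∀ (k : ℕ) (hk : 2 ≤ k) (x : Fin k), ∃ y : Fin k, (pathGraph k).Adj x y ∧ y ≠ x := by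
    intro k hk x
    by_cases h : (x : ℕ) + 1 < k
    · exact ⟨⟨x + 1, h⟩, pathGraph_adj.2 (Or.inl rfl), by
        intro he; have := congrArg Fin.val he; simp at this⟩
    · have hx1 : 1 ≤ (x : ℕ) := by have := x.isLt; omega
      refine ⟨⟨(x : ℕ) - 1, by omega⟩, pathGraph_adj.2 (Or.inr (by simp; omega)), ?_⟩
      intro he; have := congrArg Fin.val he; simp at this; omega
  obtain ⟨p', hp'adj, hp'ne⟩ := hpick m hm p
  obtain ⟨q', hq'adj, hq'ne⟩ := hpick n hn q
  -- three distinct vertices whose closed neighborhoods contain u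
  set w₁ : Fin m × Fin n := (p', q)
  set w₂ : Fin m × Fin n := (p, q')
  set w₃ : Fin m × Fin n := (p, q)
  have hw₁ : ((p, q) : Fin m × Fin n) ∈ closedNbhd G w₁ :=
    mem_closedNbhd'.2 (Or.inr (boxProd_adj.2 (Or.inl ⟨hp'adj.symm, rfl⟩)))
  have hw₂ : ((p, q) : Fin m × Fin n) ∈ closedNbhd G w₂ :=
    mem_closedNbhd'.2 (Or.inr (boxProd_adj.2 (Or.inr ⟨hq'adj.symm, rfl⟩)))
  have hw₃ : ((p, q) : Fin m × Fin n) ∈ closedNbhd G w₃ :=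
    mem_closedNbhd'.2 (Or.inl rfl)
  have h12 : w₁ ≠ w₂ := by
    intro h; exact hp'ne (congrArg Prod.fst h)
  have h13 : w₁ ≠ w₃ := by
    intro h; exact hp'ne (congrArg Prod.fst h)
  have h23 : w₂ ≠ w₃ := by
    intro h; exact hq'ne (congrArg Prod.snd h)
  -- pick two of the three distinct from vlast
  obtain ⟨e₁, e₂, he12, he₁v, he₂v, he₁N, he₂N⟩ :
      ∃ e₁ e₂ : Fin m × Fin n, e₁ ≠ e₂ ∧ e₁ ≠ vlast ∧ e₂ ≠ vlast ∧
        ((p, q) : Fin m × Fin n) ∈ closedNbhd G e₁ ∧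
        ((p, q) : Fin m × Fin n) ∈ closedNbhd G e₂ := by
    by_cases h1 : w₁ = vlast
    · exact ⟨w₂, w₃, h23, fun h => h12 (h1 ▸ h.symm ▸ rfl) |>.elim, by
        intro h; exact h13 (h1.trans h.symm), hw₂, hw₃⟩
    · by_cases h2 : w₂ = vlast
      · exact ⟨w₁, w₃, h13, h1, by intro h; exact h23 (h2.trans h.symm), hw₁, hw₃⟩
      · exact ⟨w₁, w₂, h12, h1, h2, hw₁, hw₂⟩
  set T := {w | w ∈ S.take (m * n - 1) ∧ ((p, q) : Fin m × Fin n) ∈ closedNbhd G w}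
  have hsub : ({e₁, e₂} : Set (Fin m × Fin n)) ⊆ T := by
    intro x hx
    rcases hx with h | h
    · exact ⟨hmem_take _ (h ▸ he₁v), h ▸ he₁N⟩
    · simp only [Set.mem_singleton_iff] at h
      exact ⟨hmem_take _ (h ▸ he₂v), h ▸ he₂N⟩
  have h2le : 2 ≤ T.ncard := by
    have := Set.ncard_le_ncard hsub (Set.toFinite T)
    rwa [Set.ncard_pair he12] at this
  omega

theorem grid_lower (m n : ℕ) (hm : 2 ≤ m) (hn : 2 ≤ n) :
    ∃ S : List (Fin m × Fin n),
      IsGrundySeq 2 (closedNbhd (pathGraph m □ pathGraph n))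
        (closedNbhd (pathGraph m □ pathGraph n)) S ∧ S.length = m * n - 1 := by
  have hm0 : 0 < m := by omega
  have hn0 : 0 < n := by omega
  set G := pathGraph m □ pathGraph n with hG
  set f : ℕ → Fin m × Fin n := gv m n hm0 hn0 with hf
  refine ⟨(List.range (m * n - 1)).map f, ⟨?_, ?_⟩, by simp⟩
  · -- Nodup
    refine List.Nodup.map_on ?_ List.nodup_range
    intro x hx y hy hxy
    rw [List.mem_range] at hx hy
    have hx' : x < m * n := by omega
    have hy' : y < m * n := by omega
    have := pos_gv hm0 hn0 hx'
    have := pos_gv hm0 hn0 hy'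
    rw [hf] at hxy
    rw [← pos_gv hm0 hn0 hx', ← pos_gv hm0 hn0 hy', hxy]
  · intro i hi
    have hilen : i < m * n - 1 := by simpa using hi
    have hi' : i < m * n := by omega
    obtain ⟨a, b, hblt, halt, hiab, hfi1', hfi2'⟩ :
        ∃ a b : ℕ, b < n ∧ a < m ∧ a * n + b = i ∧
          ((gv m n hm0 hn0 i).1 : ℕ) = a ∧ ((gv m n hm0 hn0 i).2 : ℕ) = b :=
      ⟨i / n, i % n, Nat.mod_lt _ hn0, (Nat.div_lt_iff_lt_mul hn0).2 (by omega),
        Nat.div_add_mod' i n, gv_fst hm0 hn0 hi', rfl⟩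
    -- the i-th vertex of the sequence
    have hget : (((List.range (m * n - 1)).map f).get ⟨i, hi⟩) = f i := by
      simp [List.get_eq_getElem]
    -- the prefix
    have htake : ((List.range (m * n - 1)).map f).take i = (List.range i).map f := by
      rw [← List.map_take, List.take_range, min_eq_left (by omega)]
    have hmemtake : ∀ w, w ∈ ((List.range (m * n - 1)).map f).take i ↔
        ∃ j, j < i ∧ f j = w := by
      intro w; rw [htake]; simp [List.mem_map, List.mem_range]
    -- coordinates of earlier vertices
    have hcoord : ∀ j, j < i → ((f j).1 : ℕ) * n + ((f j).2 : ℕ) = j := by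
      intro j hj; exact pos_gv hm0 hn0 (by omega)
    have hfi1 : ((f i).1 : ℕ) = a := hfi1'
    have hfi2 : ((f i).2 : ℕ) = b := hfi2'
    by_cases hcase : a + 1 < m
    · -- footprint the vertex below
      set u : Fin m × Fin n := (⟨a + 1, hcase⟩, ⟨b, hblt⟩) with hu
      refine ⟨u, ?_, ?_⟩
      · rw [hget, mem_closedNbhd']
        refine Or.inr ?_
        rw [hG]
        refine boxProd_adj.2 (Or.inl ⟨?_, ?_⟩)
        · exact pathGraph_adj.2 (Or.inl (by rw [hfi1]))
        · exact Fin.ext (by rw [hfi2])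
      · have hempty : {w | w ∈ ((List.range (m * n - 1)).map f).take i ∧
            u ∈ closedNbhd G w} = ∅ := by
          ext w
          simp only [Set.mem_setOf_eq, Set.mem_empty_iff_false, iff_false, not_and]
          intro hw hw2
          obtain ⟨j, hj, hjw⟩ := (hmemtake w).1 hw
          have hposw : ((w.1 : ℕ)) * n + (w.2 : ℕ) = j := by
            rw [← hjw]; exact hcoord j hj
          rw [mem_closedNbhd'] at hw2
          rcases hw2 with h | h
          · -- u = w
            have h1 : (w.1 : ℕ) = a + 1 := by rw [← h]
            have h2 : (w.2 : ℕ) = b := by rw [← h]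
            rw [h1, h2] at hposw
            have : (a + 1) * n = a * n + n := by ring
            omega
          · rw [hG] at h
            rcases boxProd_adj.1 h with ⟨hadj, heq⟩ | ⟨hadj, heq⟩
            · have h2 : (w.2 : ℕ) = b := by rw [heq]
              rcases pathGraph_adj.1 hadj with h1 | h1
              · -- w.1 + 1 = a + 1
                have : (w.1 : ℕ) = a := by simpa [hu] using h1
                rw [this, h2] at hposw; omega
              · have : (w.1 : ℕ) = a + 2 := by
                  have : ((u.1 : ℕ)) + 1 = (w.1 : ℕ) := h1
                  simpa [hu] using this.symm
                rw [this, h2] at hposw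
                have : (a + 2) * n = a * n + 2 * n := by ring
                omega
            · have h1 : (w.1 : ℕ) = a + 1 := by rw [heq]
              have h2 : (w.2 : ℕ) < n := w.2.isLt
              rw [h1] at hposw
              have : (a + 1) * n = a * n + n := by ring
              omega
        rw [hempty]
        simp
    · -- last row: footprint the vertex to the right
      have haeq : a + 1 = m := by omega
      have hmn : m * n = a * n + n := by rw [← haeq]; ring
      have hb1 : b + 1 < n := by omega
      have ha1 : 1 ≤ a := by omega
      set u : Fin m × Fin n := (⟨a, halt⟩, ⟨b + 1, hb1⟩) with hu
      refine ⟨u, ?_, ?_⟩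
      · rw [hget, mem_closedNbhd']
        refine Or.inr ?_
        rw [hG]
        refine boxProd_adj.2 (Or.inr ⟨?_, ?_⟩)
        · exact pathGraph_adj.2 (Or.inl (by rw [hfi2]))
        · exact Fin.ext (by rw [hfi1])
      · set w₀ : Fin m × Fin n := (⟨a - 1, by omega⟩, ⟨b + 1, hb1⟩) with hw₀
        have hsub : {w | w ∈ ((List.range (m * n - 1)).map f).take i ∧
            u ∈ closedNbhd G w} ⊆ {w₀} := by
          intro w hw
          obtain ⟨hw1, hw2⟩ := hw
          obtain ⟨j, hj, hjw⟩ := (hmemtake w).1 hw1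
          have hposw : ((w.1 : ℕ)) * n + (w.2 : ℕ) = j := by
            rw [← hjw]; exact hcoord j hj
          rw [mem_closedNbhd'] at hw2
          rcases hw2 with h | h
          · exfalso
            have h1 : (w.1 : ℕ) = a := by rw [← h]
            have h2 : (w.2 : ℕ) = b + 1 := by rw [← h]
            rw [h1, h2] at hposw; omega
          · rw [hG] at h
            rcases boxProd_adj.1 h with ⟨hadj, heq⟩ | ⟨hadj, heq⟩
            · have h2 : (w.2 : ℕ) = b + 1 := by rw [heq]
              rcases pathGraph_adj.1 hadj with h1 | h1
              · -- w.1 + 1 = a, so w = w₀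
                have hval : (w.1 : ℕ) + 1 = a := h1
                show w = w₀
                rw [hw₀]
                refine Prod.ext (Fin.ext ?_) (Fin.ext ?_)
                · simp; omega
                · simpa using h2
              · exfalso
                have hval : a + 1 = (w.1 : ℕ) := h1
                have := w.1.isLt
                omega
            · exfalso
              have h1 : (w.1 : ℕ) = a := by rw [heq]
              rcases pathGraph_adj.1 hadj with h2 | h2
              · have hval : (w.2 : ℕ) + 1 = b + 1 := h2
                rw [h1] at hposw; omega
              · have hval : b + 2 = (w.2 : ℕ) := h2
                rw [h1, ← hval] at hposw; omega
        have := Set.ncard_le_ncard hsub (Set.finite_singleton w₀)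
        rw [Set.ncard_singleton] at this
        omega

/-- For `m, n ≥ 2`, the `2`-Grundy domination number of the grid `P_m □ P_n` is `mn - 1`. -/
theorem kGrundy_grid (m n : ℕ) (hm : 2 ≤ m) (hn : 2 ≤ n) :
    kGrundy (SimpleGraph.pathGraph m □ SimpleGraph.pathGraph n) 2 = m * n - 1 := by
  rw [kGrundy, grundyVal]
  obtain ⟨S₀, hS₀, hS₀len⟩ := grid_lower m n hm hn
  apply le_antisymm
  · apply csSup_le
    · exact ⟨m * n - 1, S₀, hS₀, hS₀len⟩
    · rintro ℓ ⟨S, hS, rfl⟩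
      exact grid_upper m n hm hn S hS
  · apply le_csSup
    · exact ⟨m * n - 1, by rintro ℓ ⟨S, hS, rfl⟩; exact grid_upper m n hm hn S hS⟩
    · exact ⟨S₀, hS₀, hS₀len⟩
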